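/- With Γ ⊂ ℝⁿ a nonempty compact C¹-smooth embedded submanifold of dimension k (1 ≤ k ≤ n−1), ρ > 0 satisfying δ(p, r) > r/2 for all p ∈ Γ and 0 < r < 2ρ, and W ⊂ ℝ^{n+1} defined as below: if S ⊆ ℝⁿ × (0, +∞) is any set with S ∩ (ℝⁿ × (0, ρ)) ⊆ W, then for every x ∈ Γ the tangent cone satisfies Tan(S, (x,0)) ⊆ T_xΓ × [0, +∞), where T_xΓ ⊆ ℝⁿ is the tangent space to Γ at x. -/

import Mathlib

open Metric Set Filter
open scoped RealInnerProductSpace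
open scoped Topology

noncomputable section

/-- `ℝⁿ` as a Euclidean space. -/
abbrev En (n : ℕ) : Type := EuclideanSpace ℝ (Fin n)

/-- `ℝ^{n+1}` identified with `ℝⁿ × ℝ`, with the Euclidean (L²) norm. -/
abbrev En1 (n : ℕ) : Type := WithLp 2 (En n × ℝ)

/-- The identification of the plain product `ℝⁿ × ℝ` with the L²-product. -/
def emb1 (n : ℕ) : En n × ℝ → En1 n := (WithLp.equiv 2 (En n × ℝ)).symm

/-- First (ℝⁿ) coordinate of a point of `ℝ^{n+1} = ℝⁿ × ℝ`. -/
def fst1 (n : ℕ) (q : En1 n) : En n := ((WithLp.equiv 2 (En n × ℝ)) q).1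

/-- Second (ℝ) coordinate of a point of `ℝ^{n+1} = ℝⁿ × ℝ`. -/
def snd1 (n : ℕ) (q : En1 n) : ℝ := ((WithLp.equiv 2 (En n × ℝ)) q).2

/-- The (Federer) tangent cone of a set `S` at a point `p`: all vectors `w` for which
there are sequences `q i ∈ S` and `c i > 0` with `q i → p` and `c i • (q i − p) → w`. -/
def fTan {E : Type*} [NormedAddCommGroup E] [NormedSpace ℝ E] (S : Set E) (p : E) : Set E :=
  {w | ∃ (q : ℕ → E) (c : ℕ → ℝ), (∀ i, q i ∈ S) ∧ (∀ i, 0 < c i) ∧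
    Filter.Tendsto q Filter.atTop (nhds p) ∧
    Filter.Tendsto (fun i => c i • (q i - p)) Filter.atTop (nhds w)}

/-- A unit normal to `Γ` at `p`: a unit vector orthogonal to the tangent space
(= tangent cone, for a C¹ submanifold) of `Γ` at `p`. -/
def IsUnitNormal {n : ℕ} (Γ : Set (En n)) (p ν : En n) : Prop :=
  ‖ν‖ = 1 ∧ ∀ w ∈ fTan Γ p, inner ℝ ν w = (0 : ℝ)

/-- `δ(p, r) = inf_ν dist(p + rν, Γ)`, the infimum over all unit normals `ν` to `Γ` at `p`. -/
def deltaG {n : ℕ} (Γ : Set (En n)) (p : En n) (r : ℝ) : ℝ :=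
  sInf {d : ℝ | ∃ ν : En n, IsUnitNormal Γ p ν ∧ d = Metric.infDist (p + r • ν) Γ}

/-- `Γ ⊆ ℝⁿ` is a C¹-smooth embedded submanifold of dimension `k`: near each of its points
it is the regular zero level set of a C¹ map into `ℝ^{n-k}`. -/
def IsC1Submanifold {n : ℕ} (k : ℕ) (Γ : Set (En n)) : Prop :=
  ∀ p ∈ Γ, ∃ (V : Set (En n)) (f : En n → EuclideanSpace ℝ (Fin (n - k))),
    IsOpen V ∧ p ∈ V ∧ ContDiffOn ℝ 1 f V ∧
    Γ ∩ V = {y ∈ V | f y = 0} ∧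
    ∀ y ∈ V, Function.Surjective ⇑(fderivWithin ℝ f V y)

/-- The set `W = (ℝⁿ × (0, ρ)) \ ( ⋃_{d(x) > 2ρ} B_{2ρ}((x,0)) ∪ ⋃_{d(x) ≤ 2ρ} B_{d(x)}((x,0)) )`,
where `d(x) = dist(x, Γ)`. -/
def Wset {n : ℕ} (Γ : Set (En n)) (ρ : ℝ) : Set (En1 n) :=
  {q : En1 n | 0 < snd1 n q ∧ snd1 n q < ρ} \
    ((⋃ x ∈ {x : En n | 2 * ρ < Metric.infDist x Γ}, Metric.ball (emb1 n (x, 0)) (2 * ρ)) ∪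
     (⋃ x ∈ {x : En n | Metric.infDist x Γ ≤ 2 * ρ},
        Metric.ball (emb1 n (x, 0)) (Metric.infDist x Γ)))


namespace Statement7Aux

lemma proj_le_const_mul_norm_map {E F : Type*} [NormedAddCommGroup E] [InnerProductSpace ℝ E]
    [FiniteDimensional ℝ E] [NormedAddCommGroup F] [NormedSpace ℝ F] [FiniteDimensional ℝ F]
    (A : E →L[ℝ] F) (hA : Function.Surjective A) :
    ∃ C : ℝ, 0 < C ∧ ∀ h : E,
      ‖((Submodule.orthogonalProjectionOnto A.kerᗮ h : A.kerᗮ) : E)‖ ≤ C * ‖A h‖ := by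
  set K := A.ker with hK
  have hAP : ∀ h : E, A ((Submodule.orthogonalProjectionOnto Kᗮ h : E)) = A h := by
    intro h
    have hmem : h - (Submodule.orthogonalProjectionOnto Kᗮ h : E) ∈ Kᗮᗮ :=
      Submodule.sub_starProjection_mem_orthogonal h
    rw [Submodule.orthogonal_orthogonal] at hmem
    have h0 : A (h - (Submodule.orthogonalProjectionOnto Kᗮ h : E)) = 0 := hmem
    rw [map_sub, sub_eq_zero] at h0
    exact h0.symm
  set L : Kᗮ →ₗ[ℝ] F := A.toLinearMap.domRestrict Kᗮ with hL
  have hLbij : Function.Bijective L := by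
    constructor
    · rw [← LinearMap.ker_eq_bot, LinearMap.ker_eq_bot']
      intro v hv
      have hv1 : (v : E) ∈ K := hv
      have hv2 : (v : E) ∈ Kᗮ := v.2
      have h0 : (v : E) ∈ (⊥ : Submodule ℝ E) := (Submodule.orthogonal_disjoint K).le_bot ⟨hv1, hv2⟩
      exact Submodule.coe_eq_zero.mp (Submodule.mem_bot ℝ |>.mp h0)
    · intro u
      obtain ⟨h, rfl⟩ := hA u
      exact ⟨Submodule.orthogonalProjectionOnto Kᗮ h, hAP h⟩
  set e := LinearEquiv.ofBijective L hLbij with he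
  set M := LinearMap.toContinuousLinearMap e.symm.toLinearMap with hM
  refine ⟨‖M‖ + 1, by positivity, fun h => ?_⟩
  have h1 : e.symm (L (Submodule.orthogonalProjectionOnto Kᗮ h)) = Submodule.orthogonalProjectionOnto Kᗮ h :=
    e.symm_apply_apply _
  have h2 : ‖((Submodule.orthogonalProjectionOnto Kᗮ h : Kᗮ) : E)‖ = ‖M (L (Submodule.orthogonalProjectionOnto Kᗮ h))‖ := by
    rw [show M (L (Submodule.orthogonalProjectionOnto Kᗮ h)) = e.symm (L (Submodule.orthogonalProjectionOnto Kᗮ h)) from rfl,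
      h1]
    rfl
  rw [h2]
  have h3 : L (Submodule.orthogonalProjectionOnto Kᗮ h) = A h := hAP h
  rw [h3]
  calc ‖M (A h)‖ ≤ ‖M‖ * ‖A h‖ := M.le_opNorm _
    _ ≤ (‖M‖ + 1) * ‖A h‖ := by nlinarith [norm_nonneg (A h)]

/-- Coordinate projections as continuous linear maps. -/
def pi1 (n : ℕ) : En1 n →L[ℝ] En n :=
  (ContinuousLinearMap.fst ℝ (En n) ℝ).comp
    (WithLp.prodContinuousLinearEquiv 2 ℝ (En n) ℝ : En1 n →L[ℝ] En n × ℝ)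

def pi2 (n : ℕ) : En1 n →L[ℝ] ℝ :=
  (ContinuousLinearMap.snd ℝ (En n) ℝ).comp
    (WithLp.prodContinuousLinearEquiv 2 ℝ (En n) ℝ : En1 n →L[ℝ] En n × ℝ)

lemma pi1_eq (n : ℕ) (q : En1 n) : pi1 n q = fst1 n q := rfl
lemma pi2_eq (n : ℕ) (q : En1 n) : pi2 n q = snd1 n q := rfl

lemma dist1_eq (n : ℕ) (q r : En1 n) :
    dist q r = Real.sqrt (‖fst1 n q - fst1 n r‖^2 + (snd1 n q - snd1 n r)^2) := by
  rw [WithLp.prod_dist_eq_of_L2]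
  rw [show dist q.fst r.fst = ‖fst1 n q - fst1 n r‖ from dist_eq_norm _ _,
    show dist q.snd r.snd = |snd1 n q - snd1 n r| from rfl, sq_abs]

end Statement7Aux

open Statement7Aux
set_option maxHeartbeats 2000000

/-- with `Γ ⊂ ℝⁿ` a nonempty compact C¹ embedded `k`-submanifold
(`1 ≤ k ≤ n−1`), `ρ > 0` with `δ(p, r) > r/2` for all `p ∈ Γ` and `0 < r < 2ρ`, and `W` as
defined above: if `S ⊆ ℝⁿ × (0, +∞)` satisfies `S ∩ (ℝⁿ × (0, ρ)) ⊆ W`, then for every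
`x ∈ Γ` one has `Tan(S, (x,0)) ⊆ T_xΓ × [0, +∞)`, where the tangent space `T_xΓ` is the
tangent cone of `Γ` at `x`. -/


theorem statement7
    (n k : ℕ) (hk : 1 ≤ k) (hkn : k ≤ n - 1)
    (Γ : Set (En n)) (hne : Γ.Nonempty) (hcomp : IsCompact Γ)
    (hman : IsC1Submanifold k Γ)
    (ρ : ℝ) (hρ : 0 < ρ)
    (hδ : ∀ p ∈ Γ, ∀ r : ℝ, 0 < r → r < 2 * ρ → r / 2 < deltaG Γ p r)
    (S : Set (En1 n))
    (hS : ∀ q ∈ S, 0 < snd1 n q)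
    (hSW : ∀ q ∈ S, snd1 n q < ρ → q ∈ Wset Γ ρ) :
    ∀ x ∈ Γ, fTan S (emb1 n (x, 0)) ⊆
      {q : En1 n | fst1 n q ∈ fTan Γ x ∧ 0 ≤ snd1 n q} := by
  intro x hx w hw
  obtain ⟨q, c, hqS, hcpos, hqlim, hwlim⟩ := hw
  set p0 : En1 n := emb1 n (x, 0) with hp0
  set y : ℕ → En n := fun i => fst1 n (q i) with hy
  set t : ℕ → ℝ := fun i => snd1 n (q i) with ht
  have htpos : ∀ i, 0 < t i := fun i => hS _ (hqS i)
  have hcoord1 : ∀ (u : ℕ → En1 n) (l : En1 n), Tendsto u atTop (𝓝 l) →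
      Tendsto (fun i => fst1 n (u i)) atTop (𝓝 (fst1 n l)) := fun u l hl =>
    ((pi1 n).continuous.tendsto l).comp hl
  have hcoord2 : ∀ (u : ℕ → En1 n) (l : En1 n), Tendsto u atTop (𝓝 l) →
      Tendsto (fun i => snd1 n (u i)) atTop (𝓝 (snd1 n l)) := fun u l hl =>
    ((pi2 n).continuous.tendsto l).comp hl
  have hty : Tendsto y atTop (𝓝 x) := hcoord1 q p0 hqlim
  have htt : Tendsto t atTop (𝓝 0) := hcoord2 q p0 hqlim
  set w1 : En n := fst1 n w with hw1
  set w2 : ℝ := snd1 n w with hw2def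
  have hu : Tendsto (fun i => c i • (y i - x)) atTop (𝓝 w1) :=
    hcoord1 _ w hwlim
  have hs : Tendsto (fun i => c i * t i) atTop (𝓝 w2) := by
    have h0 := hcoord2 _ w hwlim
    have heq : (fun i => snd1 n (c i • (q i - p0))) = fun i => c i * t i := by
      funext i
      show c i * (t i - 0) = c i * t i
      ring
    rwa [heq] at h0
  have hw2 : 0 ≤ w2 :=
    le_of_tendsto_of_tendsto' tendsto_const_nhds hs fun i =>
      (mul_pos (hcpos i) (htpos i)).le
  refine ⟨?_, hw2⟩
  by_cases hw0 : w = 0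
  · refine ⟨fun _ => x, fun _ => 1, fun _ => hx, fun _ => one_pos, tendsto_const_nhds, ?_⟩
    have : fst1 n w = 0 := by rw [hw0]; rfl
    simpa [this] using tendsto_const_nhds
  -- now w ≠ 0, hence c i → ∞
  have hwn : (0:ℝ) < ‖w‖ := norm_pos_iff.mpr hw0
  have hcinf : Tendsto c atTop atTop := by
    rw [Filter.tendsto_atTop]
    intro M
    set M' : ℝ := max M 1 with hM'
    have hM'pos : (0:ℝ) < M' := lt_of_lt_of_le one_pos (le_max_right _ _)
    have h1 : ∀ᶠ i in atTop, ‖w‖/2 ≤ ‖c i • (q i - p0)‖ :=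
      hwlim.norm.eventually (eventually_ge_nhds (by linarith))
    have h0 : Tendsto (fun i => ‖q i - p0‖) atTop (𝓝 0) := by
      have := (tendsto_sub_nhds_zero_iff.mpr hqlim).norm
      simpa using this
    have h2 : ∀ᶠ i in atTop, ‖q i - p0‖ ≤ ‖w‖/(4*M') :=
      h0.eventually (eventually_le_nhds (by positivity))
    filter_upwards [h1, h2] with i h1 h2
    have hn : ‖c i • (q i - p0)‖ = c i * ‖q i - p0‖ := by
      rw [norm_smul, Real.norm_eq_abs, abs_of_pos (hcpos i)]
    rw [hn] at h1
    have hM : (M:ℝ) ≤ M' := le_max_left _ _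
    have h6 : ‖w‖/2 ≤ c i * (‖w‖/(4*M')) :=
      le_trans h1 (mul_le_mul_of_nonneg_left h2 (hcpos i).le)
    have h8 : c i * (‖w‖/(4*M')) = (c i * ‖w‖)/(4*M') := by ring
    rw [h8, le_div_iff₀ (by positivity : (0:ℝ) < 4*M')] at h6
    nlinarith [hwn]
  have hlam : Tendsto (fun i => (c i)⁻¹) atTop (𝓝 0) := hcinf.inv_tendsto_atTop
  -- manifold data at x
  obtain ⟨V, f, hVopen, hxV, hfC1, hgV, hsurjV⟩ := hman x hx
  have hfx0 : f x = 0 := by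
    have hxm : x ∈ Γ ∩ V := ⟨hx, hxV⟩
    rw [hgV] at hxm
    exact hxm.2
  have hmemf : ∀ y', y' ∈ Γ → y' ∈ V → f y' = 0 := by
    intro y' h1 h2
    have : y' ∈ Γ ∩ V := ⟨h1, h2⟩
    rw [hgV] at this
    exact this.2
  set A := fderivWithin ℝ f V x with hA
  have hAsurj : Function.Surjective A := hsurjV x hxV
  have hstrict : HasStrictFDerivAt f A x := by
    have h1 : ContDiffAt ℝ 1 f x := hfC1.contDiffAt (hVopen.mem_nhds hxV)
    have h2 := h1.hasStrictFDerivAt one_ne_zero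
    rwa [hA, fderivWithin_of_isOpen hVopen hxV]
  set K := A.ker with hKdef
  set Pc : En n → En n := fun h => ((Submodule.orthogonalProjectionOnto Kᗮ h : Kᗮ) : En n) with hPc
  obtain ⟨C, hCpos, hC⟩ := proj_le_const_mul_norm_map A hAsurj
  have hPadd : ∀ a b : En n, Pc (a + b) = Pc a + Pc b := by
    intro a b
    simp only [hPc, map_add]
    rfl
  have hPsmul : ∀ (r : ℝ) (a : En n), Pc (r • a) = r • Pc a := by
    intro r a
    simp only [hPc, map_smul]
    rfl
  have hPcont : Continuous Pc :=
    continuous_subtype_val.comp (Submodule.orthogonalProjectionOnto Kᗮ).continuous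
  have hPle : ∀ h : En n, ‖Pc h‖ ≤ ‖h‖ := by
    intro h
    have h1 : ‖Submodule.orthogonalProjectionOnto Kᗮ h‖ ≤ ‖Submodule.orthogonalProjectionOnto Kᗮ‖ * ‖h‖ :=
      (Submodule.orthogonalProjectionOnto Kᗮ).le_opNorm h
    have h2 := Submodule.orthogonalProjectionOnto_norm_le Kᗮ
    have h3 : ‖Pc h‖ = ‖Submodule.orthogonalProjectionOnto Kᗮ h‖ := rfl
    nlinarith [norm_nonneg h]
  -- the C¹ cone estimate
  have hD : ∀ ε : ℝ, 0 < ε → ∃ δ : ℝ, 0 < δ ∧ ∀ y' ∈ Γ, dist y' x < δ →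
      ‖Pc (y' - x)‖ ≤ ε * ‖y' - x‖ := by
    intro ε hε
    have hlo := hstrict.hasFDerivAt.isLittleO
    have h1 : ∀ᶠ y' in 𝓝 x, ‖f y' - f x - A (y' - x)‖ ≤ (ε / C) * ‖y' - x‖ :=
      hlo.def (div_pos hε hCpos)
    have h2 : ∀ᶠ y' in 𝓝 x, y' ∈ V := hVopen.mem_nhds hxV
    obtain ⟨δ, hδpos, hδ⟩ := Metric.eventually_nhds_iff_ball.mp (h1.and h2)
    refine ⟨δ, hδpos, fun y' hy'Γ hy'd => ?_⟩
    obtain ⟨hb1, hb2⟩ := hδ y' (by rwa [mem_ball])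
    have hf0 : f y' = 0 := hmemf y' hy'Γ hb2
    rw [hf0, hfx0, sub_zero, zero_sub, norm_neg] at hb1
    calc ‖Pc (y' - x)‖ ≤ C * ‖A (y' - x)‖ := hC _
      _ ≤ C * ((ε / C) * ‖y' - x‖) := by
          apply mul_le_mul_of_nonneg_left hb1 hCpos.le
      _ = ε * ‖y' - x‖ := by field_simp
  -- the key inequality
  have hG : ∀ v : En n, ‖Pc (w1 + v)‖ ≤ Real.sqrt (‖v‖^2 + w2^2) := by
    intro v
    have main : ∀ ε : ℝ, 0 < ε →
        ‖Pc (w1 + v)‖ ≤ Real.sqrt (‖v‖^2 + w2^2)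
          + ε * (Real.sqrt (‖v‖^2 + w2^2) + ‖w1 + v‖) := by
      intro ε hε
      obtain ⟨δ, hδpos, hδ⟩ := hD ε hε
      set z : ℕ → En n := fun i => y i + (c i)⁻¹ • v with hz
      have hzx : Tendsto z atTop (𝓝 x) := by
        have h1 : Tendsto (fun i => (c i)⁻¹ • v) atTop (𝓝 ((0:ℝ) • v)) := hlam.smul_const v
        rw [zero_smul] at h1
        simpa using hty.add h1
      have hev1 : ∀ᶠ i in atTop, q i ∈ Wset Γ ρ := by
        filter_upwards [htt.eventually (eventually_lt_nhds hρ)] with i hi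
        exact hSW _ (hqS i) hi
      have hev2 : ∀ᶠ i in atTop, dist (z i) x < min (δ/2) ρ := by
        apply (Metric.tendsto_nhds.mp hzx)
        exact lt_min (by linarith) hρ
      have key : ∀ᶠ i in atTop, ‖Pc (c i • (y i - x) + v)‖ ≤
          (1+ε) * Real.sqrt (‖v‖^2 + (c i * t i)^2) + ε * ‖c i • (y i - x) + v‖ := by
        filter_upwards [hev1, hev2] with i hWi hzi
        have hci : (0:ℝ) < c i := hcpos i
        have hzρ : dist (z i) x < ρ := lt_of_lt_of_le hzi (min_le_right _ _)
        have hzδ : dist (z i) x < δ/2 := lt_of_lt_of_le hzi (min_le_left _ _)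
        have hdix : infDist (z i) Γ ≤ dist (z i) x := infDist_le_dist_of_mem hx
        have hdi2ρ : infDist (z i) Γ ≤ 2 * ρ := by linarith
        have hnot : q i ∉ ball (emb1 n (z i, 0)) (infDist (z i) Γ) := by
          intro hmem
          exact hWi.2 (Or.inr (mem_biUnion hdi2ρ hmem))
        have hge : infDist (z i) Γ ≤ dist (q i) (emb1 n (z i, 0)) := by
          by_contra hlt
          exact hnot (mem_ball.mpr (not_le.mp hlt))
        have hdistf : dist (q i) (emb1 n (z i, 0))
            = Real.sqrt (‖y i - z i‖^2 + (t i)^2) := by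
          have hd := dist1_eq n (q i) (emb1 n (z i, 0))
          rw [show fst1 n (emb1 n (z i, 0)) = z i from rfl,
            show snd1 n (emb1 n (z i, 0)) = (0:ℝ) from rfl, sub_zero] at hd
          exact hd
        have hyz : ‖y i - z i‖ = (c i)⁻¹ * ‖v‖ := by
          have : y i - z i = -((c i)⁻¹ • v) := by simp only [hz, sub_add_cancel_left]
          rw [this, norm_neg, norm_smul, Real.norm_eq_abs,
            abs_of_pos (inv_pos.mpr (hcpos i))]
        have h6 : c i * infDist (z i) Γ ≤ Real.sqrt (‖v‖^2 + (c i * t i)^2) := by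
          have hle1 : infDist (z i) Γ ≤ Real.sqrt (((c i)⁻¹ * ‖v‖)^2 + (t i)^2) := by
            rw [← hyz, ← hdistf]; exact hge
          have hle2 : c i * infDist (z i) Γ ≤
              c i * Real.sqrt (((c i)⁻¹ * ‖v‖)^2 + (t i)^2) :=
            mul_le_mul_of_nonneg_left hle1 hci.le
          refine hle2.trans (le_of_eq ?_)
          rw [← Real.sqrt_sq hci.le, ← Real.sqrt_mul (sq_nonneg (c i))]
          congr 1
          field_simp
          rw [Real.sqrt_sq hci.le]
        obtain ⟨y', hy'Γ, hy'd⟩ := hcomp.exists_infDist_eq_dist hne (z i)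
        have hy'x : dist y' x < δ := by
          have h1 : dist y' x ≤ dist y' (z i) + dist (z i) x := dist_triangle _ _ _
          have h2 : dist y' (z i) = infDist (z i) Γ := by rw [dist_comm]; exact hy'd.symm
          linarith
        have hP3 : ‖Pc (y' - x)‖ ≤ ε * ‖y' - x‖ := hδ y' hy'Γ hy'x
        have hy'xn : ‖y' - x‖ ≤ infDist (z i) Γ + dist (z i) x := by
          have h1 : ‖y' - x‖ = dist y' x := (dist_eq_norm _ _).symm
          have h2 : dist y' (z i) = infDist (z i) Γ := by rw [dist_comm]; exact hy'd.symm
          have h3 := dist_triangle y' (z i) x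
          linarith
        have hPz : ‖Pc (z i - x)‖ ≤ infDist (z i) Γ + ε * ‖y' - x‖ := by
          have h1 : z i - x = (z i - y') + (y' - x) := by abel
          have h2 : ‖Pc (z i - x)‖ ≤ ‖Pc (z i - y')‖ + ‖Pc (y' - x)‖ := by
            rw [h1, hPadd]; exact norm_add_le _ _
          have h3 : ‖Pc (z i - y')‖ ≤ ‖z i - y'‖ := hPle _
          have h4 : ‖z i - y'‖ = infDist (z i) Γ := by
            rw [← dist_eq_norm]; exact hy'd.symm
          linarith
        have hzsub : c i • (z i - x) = c i • (y i - x) + v := by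
          rw [hz]
          rw [show y i + (c i)⁻¹ • v - x = (y i - x) + (c i)⁻¹ • v by abel]
          rw [smul_add, smul_smul, mul_inv_cancel₀ hci.ne', one_smul]
        have ha1 : ‖Pc (c i • (y i - x) + v)‖ = c i * ‖Pc (z i - x)‖ := by
          rw [← hzsub, hPsmul, norm_smul, Real.norm_eq_abs, abs_of_pos hci]
        have ha5 : c i * dist (z i) x = ‖c i • (y i - x) + v‖ := by
          rw [← hzsub, norm_smul, Real.norm_eq_abs, abs_of_pos hci, dist_eq_norm]
        rw [ha1]
        have hbig : c i * ‖Pc (z i - x)‖ ≤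
            c i * infDist (z i) Γ + ε * (c i * infDist (z i) Γ) + ε * (c i * dist (z i) x) := by
          have := mul_le_mul_of_nonneg_left hPz hci.le
          have h2 := mul_le_mul_of_nonneg_left hy'xn (mul_pos hε hci).le
          nlinarith
        have hfin : c i * infDist (z i) Γ + ε * (c i * infDist (z i) Γ)
              + ε * (c i * dist (z i) x)
            ≤ (1+ε) * Real.sqrt (‖v‖^2 + (c i * t i)^2) + ε * ‖c i • (y i - x) + v‖ := by
          rw [← ha5]
          nlinarith [h6]
        linarith
      have hL : Tendsto (fun i => ‖Pc (c i • (y i - x) + v)‖) atTop (𝓝 ‖Pc (w1 + v)‖) := by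
        have h1 : Tendsto (fun i => c i • (y i - x) + v) atTop (𝓝 (w1 + v)) :=
          hu.add_const v
        exact ((hPcont.tendsto _).comp h1).norm
      have hR : Tendsto (fun i => (1+ε) * Real.sqrt (‖v‖^2 + (c i * t i)^2)
            + ε * ‖c i • (y i - x) + v‖) atTop
          (𝓝 ((1+ε) * Real.sqrt (‖v‖^2 + w2^2) + ε * ‖w1 + v‖)) := by
        have h1 : Tendsto (fun i => ‖v‖^2 + (c i * t i)^2) atTop (𝓝 (‖v‖^2 + w2^2)) :=
          tendsto_const_nhds.add (hs.pow 2)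
        have h2 : Tendsto (fun i => c i • (y i - x) + v) atTop (𝓝 (w1 + v)) :=
          hu.add_const v
        exact ((h1.sqrt).const_mul _).add (h2.norm.const_mul _)
      have := le_of_tendsto_of_tendsto hL hR key
      linarith [this]
    -- remove ε
    set Lv := ‖Pc (w1 + v)‖ with hLv
    set Rv := Real.sqrt (‖v‖^2 + w2^2) with hRv
    set Bv := ‖w1 + v‖ with hBv
    have hs0 : (0:ℝ) < Rv + Bv + 1 := by
      have := Real.sqrt_nonneg (‖v‖^2 + w2^2)
      have := norm_nonneg (w1 + v)
      linarith
    have main2 : ∀ ε : ℝ, 0 < ε → Lv ≤ Rv + ε := by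
      intro ε hε
      have hεp : 0 < ε/(Rv+Bv+1) := div_pos hε hs0
      have h1 := main _ hεp
      have h4 : ε/(Rv+Bv+1) * (Rv+Bv) ≤ ε := by
        rw [div_mul_eq_mul_div, div_le_iff₀ hs0]
        nlinarith [hε]
      linarith
    by_contra hcon
    push_neg at hcon
    have := main2 ((Lv - Rv)/2) (by linarith)
    linarith
  -- Step (i): w1 lies in the kernel of A
  have hw1K : w1 ∈ K := by
    by_contra hnot
    have hbne : Pc w1 ≠ 0 := by
      intro h0
      apply hnot
      have h1 : Submodule.orthogonalProjectionOnto Kᗮ w1 = 0 := Submodule.coe_eq_zero.mp h0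
      have h2 : w1 ∈ Kᗮᗮ := Submodule.orthogonalProjectionOnto_eq_zero_iff.mp h1
      rwa [Submodule.orthogonal_orthogonal] at h2
    have hb : (0:ℝ) < ‖Pc w1‖ := norm_pos_iff.mpr hbne
    set b := ‖Pc w1‖ with hbdef
    set R : ℝ := (w2^2 + 1)/(2*b) with hR
    have hRpos : 0 < R := by positivity
    set ν : En n := b⁻¹ • Pc w1 with hν
    have hPP : Pc (Pc w1) = Pc w1 := by
      have h1 := Submodule.orthogonalProjectionOnto_mem_subspace_eq_self (Submodule.orthogonalProjectionOnto Kᗮ w1)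
      exact congrArg (fun z : Kᗮ => (z : En n)) h1
    have hPν : Pc (R • ν) = (R * b⁻¹) • Pc w1 := by
      rw [hν, smul_smul, hPsmul, hPP]
    have hnorm1 : ‖Pc (w1 + R • ν)‖ = b + R := by
      rw [hPadd, hPν]
      have h1 : Pc w1 + (R * b⁻¹) • Pc w1 = (1 + R * b⁻¹) • Pc w1 := by
        rw [add_smul, one_smul]
      rw [h1, norm_smul, Real.norm_eq_abs,
        abs_of_pos (by positivity : (0:ℝ) < 1 + R * b⁻¹), ← hbdef]
      field_simp
    have hnormv : ‖R • ν‖ = R := by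
      rw [hν, norm_smul, norm_smul, Real.norm_eq_abs, Real.norm_eq_abs,
        abs_of_pos hRpos, abs_of_pos (inv_pos.mpr hb), ← hbdef]
      field_simp
    have hGin := hG (R • ν)
    rw [hnorm1, hnormv] at hGin
    have hsq : (b + R)^2 ≤ R^2 + w2^2 := by
      have h0 : 0 ≤ b + R := by positivity
      exact (Real.le_sqrt h0 (by positivity)).mp hGin
    have hbR : 2 * b * R = w2^2 + 1 := by
      rw [hR]; field_simp
    nlinarith [sq_nonneg b]
  -- Step (ii): implicit function theorem produces points of Γ along w1
  have hker : A.ker.ClosedComplemented :=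
    Submodule.ClosedComplemented.of_finiteDimensional _
  have hrange : A.range = ⊤ := (LinearMap.range_eq_top (f := A.toLinearMap)).mpr hAsurj
  set g : A.ker → En n :=
    hstrict.implicitFunctionOfComplemented f A hrange hker (f x) with hgdef
  have hg0 : g 0 = x := hstrict.implicitFunctionOfComplemented_apply_image hrange hker
  have hgderiv : HasStrictFDerivAt g A.ker.subtypeL 0 :=
    hstrict.to_implicitFunctionOfComplemented hrange hker
  have hgf : ∀ᶠ z : A.ker in 𝓝 0, f (g z) = 0 := by
    have hmap := hstrict.map_implicitFunctionOfComplemented_eq hrange hker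
    have htend : Tendsto (fun z : A.ker => (f x, z)) (𝓝 0) (𝓝 (f x, 0)) :=
      (Continuous.prodMk_right (f x)).tendsto 0
    have h1 := htend.eventually hmap
    refine h1.mono fun z hz => ?_
    exact hz.trans hfx0
  set w1K : A.ker := ⟨w1, hw1K⟩ with hw1Kdef
  have hzlim : Tendsto (fun i => (c i)⁻¹ • w1K) atTop (𝓝 0) := by
    have h1 := hlam.smul_const w1K
    simpa using h1
  set p : ℕ → En n := fun i => g ((c i)⁻¹ • w1K) with hpdef
  have hplim : Tendsto p atTop (𝓝 x) := by
    have hcont : ContinuousAt g 0 := hgderiv.continuousAt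
    have h1 := hcont.tendsto.comp hzlim
    rwa [hg0] at h1
  have hpΓ : ∀ᶠ i in atTop, p i ∈ Γ := by
    have h1 : ∀ᶠ i in atTop, f (p i) = 0 := hzlim.eventually hgf
    have h2 : ∀ᶠ i in atTop, p i ∈ V := hplim.eventually (hVopen.eventually_mem hxV)
    filter_upwards [h1, h2] with i h1 h2
    have h3 : p i ∈ Γ ∩ V := by rw [hgV]; exact ⟨h2, h1⟩
    exact h3.1
  have hlo := hasFDerivAt_iff_isLittleO_nhds_zero.mp hgderiv.hasFDerivAt
  have hplin0 : Tendsto (fun i => c i • (p i - x) - w1) atTop (𝓝 0) := by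
    rw [NormedAddCommGroup.tendsto_nhds_zero]
    intro ε hε
    have hεp : (0:ℝ) < ε / (‖w1K‖ + 1) := by positivity
    have hev := (hlo.comp_tendsto hzlim).def hεp
    filter_upwards [hev] with i hi
    have hci : (0:ℝ) < c i := hcpos i
    simp only [Function.comp] at hi
    rw [zero_add, hg0] at hi
    rw [show (A.ker.subtypeL ((c i)⁻¹ • w1K) : En n) = (c i)⁻¹ • w1 from rfl] at hi
    have heq : c i • (p i - x) - w1 = c i • (p i - x - (c i)⁻¹ • w1) := by
      rw [smul_sub (c i) (p i - x) ((c i)⁻¹ • w1), smul_smul, mul_inv_cancel₀ hci.ne', one_smul]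
    have hznorm : ‖(c i)⁻¹ • w1K‖ = (c i)⁻¹ * ‖w1K‖ := by
      rw [norm_smul, Real.norm_eq_abs, abs_of_pos (inv_pos.mpr hci)]
    have hc1 : ‖c i • (p i - x) - w1‖ = c i * ‖p i - x - (c i)⁻¹ • w1‖ := by
      rw [heq, norm_smul, Real.norm_eq_abs, abs_of_pos hci]
    have hc2 : c i * ‖p i - x - (c i)⁻¹ • w1‖ ≤
        c i * (ε / (‖w1K‖ + 1) * ((c i)⁻¹ * ‖w1K‖)) := by
      apply mul_le_mul_of_nonneg_left _ hci.le
      rw [← hznorm]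
      exact hi
    have hc3 : c i * (ε / (‖w1K‖ + 1) * ((c i)⁻¹ * ‖w1K‖)) = ε / (‖w1K‖ + 1) * ‖w1K‖ := by
      field_simp
    have hc4 : ε / (‖w1K‖ + 1) * ‖w1K‖ < ε := by
      rw [div_mul_eq_mul_div, div_lt_iff₀ (by positivity : (0:ℝ) < ‖w1K‖ + 1)]
      nlinarith [norm_nonneg w1K, hε]
    rw [hc1]
    calc c i * ‖p i - x - (c i)⁻¹ • w1‖ ≤ _ := hc2
      _ = _ := hc3
      _ < ε := hc4
  have hplin : Tendsto (fun i => c i • (p i - x)) atTop (𝓝 w1) := by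
    have h1 := hplin0.add_const w1
    simpa using h1
  obtain ⟨N, hN⟩ := eventually_atTop.mp hpΓ
  exact ⟨fun i => p (i + N), fun i => c (i + N), fun i => hN _ (Nat.le_add_left N i),
    fun i => hcpos _, hplim.comp (tendsto_add_atTop_nat N),
    hplin.comp (tendsto_add_atTop_nat N)⟩
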